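/- arXiv:1703.01586 — 3 statements merged into one kernel-verified Lean document; each statement's English description precedes it below -/
import Mathlib

section
/- Let S ⊆ {0,1}^n be the set of all binary words with at most s switches, where the number of switches of x = x_1…x_n is |{i : 1 ≤ i ≤ n−1, x_i ≠ x_{i+1}}|. Then the VC-dimension of S (and hence of any subset of S) is at most s + 1. -/
def Shatters {n : ℕ} (C : Finset (Fin n → Bool)) (I : Finset (Fin n)) : Prop :=
  ∀ p : Fin n → Bool, ∃ x ∈ C, ∀ i ∈ I, x i = p i

/-- The number of switches of a binary word: the number of indices `i` with
`1 ≤ i ≤ n-1` (0-indexed: `i+1 < n`) such that `x_i ≠ x_{i+1}`. -/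
def switches {n : ℕ} (x : Fin n → Bool) : ℕ :=
  (Finset.univ.filter fun p : Fin n × Fin n => (p.2 : ℕ) = (p.1 : ℕ) + 1 ∧ x p.1 ≠ x p.2).card

/-- Any set of binary words, each with at most `s` switches, has VC-dimension
at most `s + 1`. -/
theorem vcDim_switches {n s : ℕ} (C : Finset (Fin n → Bool))
    (hC : ∀ x ∈ C, switches x ≤ s) :
    ∀ I : Finset (Fin n), Shatters C I → I.card ≤ s + 1 := by
  classical
  intro I hI
  rcases Nat.eq_zero_or_pos n with hn | hn
  · subst hn
    have hI0 : I = ∅ := Finset.eq_empty_of_isEmpty I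
    simp [hI0]
  set k := I.card with hk
  have e : Fin k ≃o I := I.orderIsoOfFin rfl
  set p : Fin n → Bool := fun i =>
    if h : i ∈ I then decide (((e.symm ⟨i, h⟩ : Fin k) : ℕ) % 2 = 0) else false with hp
  obtain ⟨x, hxC, hx⟩ := hI p
  -- values of x on I
  have hxe : ∀ j : Fin k, x (e j) = decide ((j : ℕ) % 2 = 0) := by
    intro j
    have hmem : ((e j : I) : Fin n) ∈ I := (e j).2
    rw [hx _ hmem, hp]
    simp only [dif_pos hmem]
    have h2 : (⟨((e j : I) : Fin n), hmem⟩ : I) = e j := by ext; rfl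
    rw [h2, e.symm_apply_apply]
  -- extend x to ℕ
  set x' : ℕ → Bool := fun c => if h : c < n then x ⟨c, h⟩ else false with hx'
  -- switch finding
  have step : ∀ a b : ℕ, a < b → x' a ≠ x' b →
      ∃ c, a ≤ c ∧ c < b ∧ x' c ≠ x' (c + 1) := by
    intro a b hab hne
    by_contra hcon
    push_neg at hcon
    apply hne
    have key : ∀ d, a ≤ d → d ≤ b → x' a = x' d := by
      intro d
      induction d with
      | zero =>
        intro h1 _
        have : a = 0 := Nat.le_zero.mp h1
        rw [this]
      | succ d ih =>
        intro h1 h2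
        rcases Nat.lt_or_ge d a with h | h
        · have : a = d + 1 := by omega
          rw [this]
        · have := hcon d h (by omega)
          rw [← this]
          exact ih h (by omega)
    exact key b (le_of_lt hab) le_rfl
  -- the set of switch positions
  set T : Finset ℕ :=
    (Finset.range n).filter (fun c => c + 1 < n ∧ x' c ≠ x' (c + 1)) with hT
  -- T.card ≤ switches x
  have hTcard : T.card ≤ switches x := by
    rw [switches]
    apply Finset.card_le_card_of_injOn
      (fun c => ((⟨min c (n-1), by omega⟩ : Fin n), (⟨min (c+1) (n-1), by omega⟩ : Fin n)))
    · intro c hc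
      rw [hT, Finset.mem_coe, Finset.mem_filter, Finset.mem_range] at hc
      obtain ⟨hc1, hc2, hc3⟩ := hc
      have hm1 : min c (n-1) = c := by omega
      have hm2 : min (c+1) (n-1) = c + 1 := by omega
      simp only [Finset.mem_coe, Finset.mem_filter, Finset.mem_univ, true_and, hm1, hm2]
      have e1 : x' c = x ⟨c, hc1⟩ := by rw [hx']; exact dif_pos hc1
      have e2 : x' (c+1) = x ⟨c+1, hc2⟩ := by rw [hx']; exact dif_pos hc2
      rw [e1, e2] at hc3
      exact hc3
    · intro c hc c' hc' heq
      rw [Finset.mem_coe, hT, Finset.mem_filter, Finset.mem_range] at hc hc'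
      have h1 : min c (n-1) = c := by omega
      have h1' : min c' (n-1) = c' := by omega
      have := congrArg (fun q => (q.1 : ℕ)) heq
      simpa [h1, h1'] using this
  -- positions of elements of I
  set A : ℕ → ℕ := fun j => if h : j < k then ((e ⟨j, h⟩ : I) : Fin n).val else 0 with hA
  have hAlt : ∀ j (h : j < k), A j < n := by
    intro j h
    rw [hA]
    simp only [dif_pos h]
    exact ((e ⟨j, h⟩ : I) : Fin n).isLt
  have hAx : ∀ j (h : j < k), x' (A j) = decide (j % 2 = 0) := by
    intro j h
    have hlt := hAlt j h
    rw [hx']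
    simp only [dif_pos hlt]
    have hval : A j = ((e ⟨j, h⟩ : I) : Fin n).val := by
      rw [hA]; simp [dif_pos h]
    have : (⟨A j, hlt⟩ : Fin n) = ((e ⟨j, h⟩ : I) : Fin n) := Fin.ext (by simpa using hval)
    rw [this, hxe ⟨j, h⟩]
  have hAmono : ∀ j j' (h : j < k) (h' : j' < k), j < j' → A j < A j' := by
    intro j j' h h' hjj
    rw [hA]
    simp only [dif_pos h, dif_pos h']
    have : (⟨j, h⟩ : Fin k) < ⟨j', h'⟩ := hjj
    exact e.strictMono this
  -- choose a switch between consecutive elements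
  have hswitch : ∀ j, j + 1 < k →
      ∃ c, A j ≤ c ∧ c < A (j + 1) ∧ x' c ≠ x' (c + 1) := by
    intro j hj
    apply step
    · exact hAmono j (j+1) (by omega) hj (by omega)
    · rw [hAx j (by omega), hAx (j+1) hj]
      intro hcon
      rw [decide_eq_decide] at hcon
      omega
  set F : ℕ → ℕ := fun j => if h : j + 1 < k then Classical.choose (hswitch j h) else 0
    with hF
  have hFspec : ∀ j (h : j + 1 < k),
      A j ≤ F j ∧ F j < A (j + 1) ∧ x' (F j) ≠ x' (F j + 1) := by
    intro j h
    rw [hF]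
    simp only [dif_pos h]
    exact Classical.choose_spec (hswitch j h)
  have hmain : k - 1 ≤ T.card := by
    have : (Finset.range (k - 1)).card ≤ T.card := by
      apply Finset.card_le_card_of_injOn F
      · intro j hj
        rw [Finset.mem_coe, Finset.mem_range] at hj
        have h : j + 1 < k := by omega
        obtain ⟨h1, h2, h3⟩ := hFspec j h
        have := hAlt (j+1) h
        rw [Finset.mem_coe, hT, Finset.mem_filter, Finset.mem_range]
        exact ⟨by omega, by omega, h3⟩
      · have hlt : ∀ j j', j + 1 < k → j' + 1 < k → j < j' → F j < F j' := by
          intro j j' h h' hjj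
          obtain ⟨h1, h2, h3⟩ := hFspec j h
          obtain ⟨h1', h2', h3'⟩ := hFspec j' h'
          have : A (j+1) ≤ A j' := by
            rcases Nat.lt_or_ge (j+1) j' with hc | hc
            · exact le_of_lt (hAmono (j+1) j' (by omega) (by omega) hc)
            · have : j + 1 = j' := by omega
              rw [this]
          omega
        intro j hj j' hj' heq
        rw [Finset.coe_range, Set.mem_Iio] at hj hj'
        rcases lt_trichotomy j j' with h | h | h
        · exact absurd heq (by have := hlt j j' (by omega) (by omega) h; omega)
        · exact h
        · exact absurd heq (by have := hlt j' j (by omega) (by omega) h; omega)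
    simpa using this
  have := hC x hxC
  omega
end

section
/- Let S ⊆ {0,1}^n, and for 0 ≤ r ≤ n let B_S(r) = {(w, w') ∈ S × S : dist(w, w') ≤ r}. Then there exists a code M ⊆ S with minimum distance at least Δ and |M| ≥ |S|² / (4·|B_S(Δ − 1)|). -/
private lemma greedy_gv {n : ℕ} (Δ s c : ℕ) :
    ∀ T : Finset (Fin n → Bool),
      (∀ x ∈ T, ((T.filter fun y => hammingDist x y ≤ Δ - 1).card) * s ≤ c) →
      ∃ M ⊆ T, (∀ x ∈ M, ∀ y ∈ M, x ≠ y → Δ ≤ hammingDist x y) ∧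
        T.card * s ≤ M.card * c := by
  intro T
  induction T using Finset.strongInduction with
  | _ T ih =>
    intro hball
    rcases T.eq_empty_or_nonempty with rfl | ⟨x, hx⟩
    · exact ⟨∅, by simp⟩
    · set Bx := T.filter (fun y => hammingDist x y ≤ Δ - 1) with hBx
      have hBxT : Bx ⊆ T := Finset.filter_subset _ _
      have hxBx : x ∈ Bx := by
        simp [hBx, hx]
      have hss : T \ Bx ⊂ T := by
        apply Finset.sdiff_ssubset hBxT ⟨x, hxBx⟩
      obtain ⟨M, hMsub, hMdist, hMcard⟩ := ih (T \ Bx) hss (fun y hy => by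
        refine le_trans (Nat.mul_le_mul_right s ?_) (hball y (Finset.mem_sdiff.mp hy).1)
        exact Finset.card_le_card (Finset.filter_subset_filter _ Finset.sdiff_subset))
      have hxM : x ∉ M := fun hxM => (Finset.mem_sdiff.mp (hMsub hxM)).2 hxBx
      have key : ∀ y ∈ M, Δ ≤ hammingDist x y := by
        intro y hy
        have hy2 := (Finset.mem_sdiff.mp (hMsub hy)).2
        simp only [hBx, Finset.mem_filter, not_and, not_le] at hy2
        have := hy2 (Finset.mem_sdiff.mp (hMsub hy)).1
        omega
      have key' : ∀ y ∈ M, Δ ≤ hammingDist y x := fun y hy => by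
        rw [hammingDist_comm]; exact key y hy
      refine ⟨insert x M, ?_, ?_, ?_⟩
      · intro y hy
        rcases Finset.mem_insert.mp hy with rfl | hy
        · exact hx
        · exact (Finset.mem_sdiff.mp (hMsub hy)).1
      · intro a ha b hb hab
        rcases Finset.mem_insert.mp ha with h1 | h1 <;>
          rcases Finset.mem_insert.mp hb with h2 | h2
        · exact absurd (h1.trans h2.symm) hab
        · subst h1; exact key b h2
        · subst h2; exact key' a h1
        · exact hMdist a h1 b h2 hab
      · rw [Finset.card_insert_of_notMem hxM]
        have h1 : T.card ≤ (T \ Bx).card + Bx.card := by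
          rw [Finset.card_sdiff_of_subset hBxT]
          omega
        have h2 : Bx.card * s ≤ c := hball x hx
        calc T.card * s ≤ ((T \ Bx).card + Bx.card) * s := Nat.mul_le_mul_right s h1
          _ = (T \ Bx).card * s + Bx.card * s := by ring
          _ ≤ M.card * c + c := add_le_add hMcard h2
          _ = (M.card + 1) * c := by ring

/-- Generalized Gilbert–Varshamov bound of Kolesnik–Krachkovsky: any subset `S`
of the Hamming cube contains a code of minimum distance at least `Δ` and size
at least `|S|² / (4·|B_S(Δ-1)|)`. -/
theorem generalized_gv {n Δ : ℕ} (S : Finset (Fin n → Bool)) :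
    ∃ M ⊆ S,
      (∀ x ∈ M, ∀ y ∈ M, x ≠ y → Δ ≤ hammingDist x y) ∧
      ((S.card : ℚ) ^ 2) /
          (4 * ((S ×ˢ S).filter fun p => hammingDist p.1 p.2 ≤ Δ - 1).card)
        ≤ M.card := by
  rcases S.eq_empty_or_nonempty with rfl | ⟨z, hz⟩
  · refine ⟨∅, Finset.empty_subset _, by simp, ?_⟩
    simp only [Finset.card_empty, Nat.cast_zero]
    rw [zero_pow two_ne_zero, zero_div]
  set B := ((S ×ˢ S).filter fun p => hammingDist p.1 p.2 ≤ Δ - 1).card with hBdef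
  have hBpos : 0 < B := by
    apply Finset.card_pos.mpr
    exact ⟨(z, z), by simp [Finset.mem_filter, hz]⟩
  have hBsum : B = ∑ x ∈ S, (S.filter fun y => hammingDist x y ≤ Δ - 1).card := by
    rw [hBdef, Finset.card_filter, Finset.sum_product]
    exact Finset.sum_congr rfl fun x _ => (Finset.card_filter _ _).symm
  set T := S.filter (fun x => (S.filter fun y => hammingDist x y ≤ Δ - 1).card * S.card ≤ 2 * B)
    with hTdef
  have hTS : T ⊆ S := Finset.filter_subset _ _
  -- Markov: 2 * T.card ≥ S.card
  have hmarkov : S.card ≤ 2 * T.card := by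
    have hout : ∀ x ∈ S \ T, 2 * B < (S.filter fun y => hammingDist x y ≤ Δ - 1).card * S.card := by
      intro x hx
      have := Finset.mem_sdiff.mp hx
      have h2 := this.2
      simp only [hTdef, Finset.mem_filter, this.1, true_and, not_le] at h2
      exact h2
    have hsum : (S \ T).card * (2 * B + 1) ≤ ∑ x ∈ S \ T,
        (S.filter fun y => hammingDist x y ≤ Δ - 1).card * S.card := by
      calc (S \ T).card * (2 * B + 1) = ∑ _x ∈ S \ T, (2 * B + 1) := by
            rw [Finset.sum_const, smul_eq_mul]
        _ ≤ _ := Finset.sum_le_sum (fun x hx => hout x hx)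
    have hsum2 : ∑ x ∈ S \ T, (S.filter fun y => hammingDist x y ≤ Δ - 1).card * S.card
        ≤ B * S.card := by
      rw [hBsum, Finset.sum_mul]
      exact Finset.sum_le_sum_of_subset Finset.sdiff_subset
    have h3 : (S \ T).card * 2 * B ≤ S.card * B := by
      calc (S \ T).card * 2 * B ≤ (S \ T).card * (2 * B + 1) := by nlinarith
        _ ≤ B * S.card := le_trans hsum hsum2
        _ = S.card * B := mul_comm _ _
    have h4 : (S \ T).card * 2 ≤ S.card := Nat.le_of_mul_le_mul_right h3 hBpos
    have h5 : (S \ T).card = S.card - T.card := Finset.card_sdiff_of_subset hTS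
    have h6 : T.card ≤ S.card := Finset.card_le_card hTS
    omega
  obtain ⟨M, hMT, hMd, hMc⟩ := greedy_gv Δ S.card (2 * B) T (by
    intro x hx
    have hxT := Finset.mem_filter.mp hx
    refine le_trans (Nat.mul_le_mul_right _ ?_) hxT.2
    exact Finset.card_le_card (Finset.filter_subset_filter _ hTS))
  refine ⟨M, hMT.trans hTS, hMd, ?_⟩
  have hnat : S.card ^ 2 ≤ M.card * (4 * B) := by
    have hsq : S.card ^ 2 = S.card * S.card := sq S.card
    nlinarith [hMc, hmarkov]
  rw [div_le_iff₀ (by positivity)]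
  calc ((S.card : ℚ))^2 ≤ ((M.card * (4 * B) : ℕ) : ℚ) := by exact_mod_cast hnat
    _ = M.card * (4 * B) := by push_cast; ring
end

section
/- For the 2×2 matrix A(x) with entries A_{aa} = A_{bb} = 1 and A_{ab} = A_{ba} = 2^{−x} (x ∈ ℝ), the spectral radius of A(x) equals 2^{−x} + 1, and consequently inf_{x ∈ ℝ} { p·x + log₂(2^{−x} + 1) } = h(p) for 0 ≤ p ≤ 1, where h is the binary entropy function h(p) = −p log₂ p − (1−p) log₂(1−p). -/
open Real

/-- The matrix `A(x)` with unit diagonal and off-diagonal entries `2^{-x}`. -/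
noncomputable def A (x : ℝ) : Matrix (Fin 2) (Fin 2) ℝ :=
  !![1, 2 ^ (-x); 2 ^ (-x), 1]

lemma spec_iff (x μ : ℝ) :
    μ ∈ spectrum ℝ (A x) ↔ (μ - 1) ^ 2 = ((2:ℝ) ^ (-x)) ^ 2 := by
  rw [spectrum.mem_iff, Matrix.isUnit_iff_isUnit_det, isUnit_iff_ne_zero, not_ne_iff]
  have h : (algebraMap ℝ (Matrix (Fin 2) (Fin 2) ℝ)) μ - A x
      = !![μ - 1, -((2:ℝ) ^ (-x)); -((2:ℝ) ^ (-x)), μ - 1] := by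
    ext i j; fin_cases i <;> fin_cases j <;>
      simp [Matrix.algebraMap_matrix_apply, A]
  rw [h, Matrix.det_fin_two_of]
  constructor <;> intro h' <;> nlinarith [h']

lemma amgm {p t : ℝ} (hp0 : 0 < p) (hp1 : p < 1) (ht : 0 < t) :
    t ^ p ≤ (t + 1) * (p ^ p * (1-p) ^ (1-p)) := by
  have h1p : 0 < 1 - p := by linarith
  have h := Real.geom_mean_le_arith_mean2_weighted hp0.le h1p.le
      (div_nonneg ht.le hp0.le) (by positivity : (0:ℝ) ≤ 1/(1-p)) (by ring)
  have heq : p * (t/p) + (1-p) * (1/(1-p)) = t + 1 := by field_simp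
  rw [heq] at h
  have hLHS : (t/p) ^ p * (1/(1-p)) ^ (1-p) = t ^ p / (p ^ p * (1-p) ^ (1-p)) := by
    rw [Real.div_rpow ht.le hp0.le, Real.div_rpow (by norm_num) h1p.le, Real.one_rpow]
    field_simp
  rw [hLHS] at h
  have hpos : 0 < p ^ p * (1-p) ^ (1-p) := by positivity
  calc t ^ p = t ^ p / (p^p*(1-p)^(1-p)) * (p^p*(1-p)^(1-p)) := by field_simp
    _ ≤ (t+1) * (p^p*(1-p)^(1-p)) := mul_le_mul_of_nonneg_right h hpos.le

lemma lowbd {p : ℝ} (hp0 : 0 < p) (hp1 : p < 1) (x : ℝ) :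
    -(p * Real.logb 2 p) - (1 - p) * Real.logb 2 (1 - p)
      ≤ p * x + Real.logb 2 ((2:ℝ) ^ (-x) + 1) := by
  have h1p : 0 < 1 - p := by linarith
  set t : ℝ := (2:ℝ) ^ (-x) with htdef
  have ht : 0 < t := Real.rpow_pos_of_pos two_pos _
  have hlogt : Real.log t = (-x) * Real.log 2 := Real.log_rpow two_pos _
  have key := amgm hp0 hp1 ht
  have hlog := Real.log_le_log (Real.rpow_pos_of_pos ht p) key
  rw [Real.log_rpow ht, Real.log_mul (by positivity) (by positivity),
      Real.log_mul (by positivity) (by positivity),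
      Real.log_rpow hp0, Real.log_rpow h1p] at hlog
  have hlog2 : 0 < Real.log 2 := Real.log_pos one_lt_two
  have goal' : -(p * Real.log p) - (1-p) * Real.log (1-p)
      ≤ p * x * Real.log 2 + Real.log (t+1) := by nlinarith [hlog, hlogt]
  have e1 : -(p * Real.logb 2 p) - (1-p) * Real.logb 2 (1-p)
      = (-(p * Real.log p) - (1-p) * Real.log (1-p)) / Real.log 2 := by
    unfold Real.logb; ring
  have e2 : p * x + Real.logb 2 (t+1)
      = (p * x * Real.log 2 + Real.log (t+1)) / Real.log 2 := by
    unfold Real.logb; field_simp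
  rw [e1, e2]
  exact div_le_div_of_nonneg_right goal' hlog2.le

lemma attain {p : ℝ} (hp0 : 0 < p) (hp1 : p < 1) :
    p * (Real.logb 2 ((1-p)/p)) + Real.logb 2 ((2:ℝ) ^ (-(Real.logb 2 ((1-p)/p))) + 1)
      = -(p * Real.logb 2 p) - (1 - p) * Real.logb 2 (1 - p) := by
  have h1p : 0 < 1 - p := by linarith
  have hq : 0 < (1-p)/p := by positivity
  have ht : (2:ℝ) ^ (-(Real.logb 2 ((1-p)/p))) = p/(1-p) := by
    rw [Real.rpow_neg (by norm_num), Real.rpow_logb two_pos (by norm_num) hq, inv_div]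
  rw [ht]
  have h2 : p/(1-p) + 1 = 1/(1-p) := by field_simp; ring
  rw [h2, Real.logb_div (by positivity) hp0.ne', Real.logb_div one_ne_zero h1p.ne',
    Real.logb_one]
  ring

/-- The spectral radius of `A(x)` is `2^{-x} + 1`, and the Legendre dual of the
log-spectral radius is the binary entropy function. -/
theorem spectral_radius_and_entropy (p : ℝ) (hp0 : 0 ≤ p) (hp1 : p ≤ 1) :
    (∀ x : ℝ, ((2 : ℝ) ^ (-x) + 1) ∈ spectrum ℝ (A x) ∧
      ∀ μ ∈ spectrum ℝ (A x), |μ| ≤ (2 : ℝ) ^ (-x) + 1) ∧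
    (⨅ x : ℝ, p * x + Real.logb 2 ((2 : ℝ) ^ (-x) + 1))
      = -(p * Real.logb 2 p) - (1 - p) * Real.logb 2 (1 - p) := by
  constructor
  · intro x
    have ht : 0 < (2:ℝ) ^ (-x) := Real.rpow_pos_of_pos two_pos _
    refine ⟨(spec_iff x _).mpr (by ring), fun μ hμ => ?_⟩
    rw [spec_iff] at hμ
    exact abs_le.mpr ⟨by nlinarith, by nlinarith⟩
  · rcases hp0.eq_or_lt with h0 | h0
    · -- p = 0
      obtain rfl : p = 0 := h0.symm
      have hrhs : -((0:ℝ) * Real.logb 2 0) - (1 - 0) * Real.logb 2 (1 - 0) = 0 := by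
        norm_num
      rw [hrhs]
      have hnn : ∀ x : ℝ, (0:ℝ) ≤ 0 * x + Real.logb 2 ((2:ℝ) ^ (-x) + 1) := by
        intro x
        have ht : 0 < (2:ℝ) ^ (-x) := Real.rpow_pos_of_pos two_pos _
        have := Real.logb_nonneg one_lt_two (by linarith : (1:ℝ) ≤ (2:ℝ)^(-x) + 1)
        linarith
      have hbdd : BddBelow (Set.range fun x : ℝ =>
          (0:ℝ) * x + Real.logb 2 ((2:ℝ) ^ (-x) + 1)) := by
        refine ⟨0, ?_⟩; rintro y ⟨x, rfl⟩; exact hnn x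
      refine le_antisymm (le_of_forall_pos_le_add fun ε hε => ?_) (le_ciInf hnn)
      have h2e : (1:ℝ) < (2:ℝ) ^ ε := by
        calc (1:ℝ) = (2:ℝ) ^ (0:ℝ) := by rw [Real.rpow_zero]
        _ < (2:ℝ) ^ ε := Real.rpow_lt_rpow_left_iff one_lt_two |>.mpr hε
      set x₀ : ℝ := -Real.logb 2 ((2:ℝ) ^ ε - 1) with hx₀
      have hval : (0:ℝ) * x₀ + Real.logb 2 ((2:ℝ) ^ (-x₀) + 1) = ε := by
        rw [hx₀, neg_neg, Real.rpow_logb two_pos (by norm_num) (by linarith),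
          zero_mul, zero_add, sub_add_cancel, Real.logb_rpow two_pos (by norm_num)]
      calc (⨅ x : ℝ, (0:ℝ) * x + Real.logb 2 ((2:ℝ) ^ (-x) + 1))
          ≤ 0 * x₀ + Real.logb 2 ((2:ℝ) ^ (-x₀) + 1) := ciInf_le hbdd x₀
        _ = 0 + ε := by rw [hval, zero_add]
    · rcases hp1.eq_or_lt with h1 | h1
      · -- p = 1
        obtain rfl : p = 1 := h1
        have hrhs : -((1:ℝ) * Real.logb 2 1) - (1 - 1) * Real.logb 2 (1 - 1) = 0 := by
          norm_num
        rw [hrhs]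
        have hfx : ∀ x : ℝ, (1:ℝ) * x + Real.logb 2 ((2:ℝ) ^ (-x) + 1)
            = Real.logb 2 ((2:ℝ) ^ x + 1) := by
          intro x
          have h1 : ((2:ℝ) ^ x + 1) = (2:ℝ) ^ x * ((2:ℝ) ^ (-x) + 1) := by
            rw [mul_add, mul_one, ← Real.rpow_add two_pos]
            rw [add_neg_cancel, Real.rpow_zero]; ring
          rw [h1, Real.logb_mul (by positivity) (by positivity),
            Real.logb_rpow two_pos (by norm_num), one_mul]
        have hnn : ∀ x : ℝ, (0:ℝ) ≤ 1 * x + Real.logb 2 ((2:ℝ) ^ (-x) + 1) := by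
          intro x
          rw [hfx x]
          have ht : 0 < (2:ℝ) ^ x := Real.rpow_pos_of_pos two_pos _
          exact Real.logb_nonneg one_lt_two (by linarith)
        have hbdd : BddBelow (Set.range fun x : ℝ =>
            (1:ℝ) * x + Real.logb 2 ((2:ℝ) ^ (-x) + 1)) := by
          refine ⟨0, ?_⟩; rintro y ⟨x, rfl⟩; exact hnn x
        refine le_antisymm (le_of_forall_pos_le_add fun ε hε => ?_) (le_ciInf hnn)
        have h2e : (1:ℝ) < (2:ℝ) ^ ε := by
          calc (1:ℝ) = (2:ℝ) ^ (0:ℝ) := by rw [Real.rpow_zero]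
          _ < (2:ℝ) ^ ε := Real.rpow_lt_rpow_left_iff one_lt_two |>.mpr hε
        set x₀ : ℝ := Real.logb 2 ((2:ℝ) ^ ε - 1) with hx₀
        have hval : (1:ℝ) * x₀ + Real.logb 2 ((2:ℝ) ^ (-x₀) + 1) = ε := by
          rw [hfx x₀, hx₀, Real.rpow_logb two_pos (by norm_num) (by linarith),
            sub_add_cancel, Real.logb_rpow two_pos (by norm_num)]
        calc (⨅ x : ℝ, (1:ℝ) * x + Real.logb 2 ((2:ℝ) ^ (-x) + 1))
            ≤ 1 * x₀ + Real.logb 2 ((2:ℝ) ^ (-x₀) + 1) := ciInf_le hbdd x₀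
          _ = 0 + ε := by rw [hval, zero_add]
      · -- 0 < p < 1
        have hbdd : BddBelow (Set.range fun x : ℝ =>
            p * x + Real.logb 2 ((2:ℝ) ^ (-x) + 1)) := by
          refine ⟨-(p * Real.logb 2 p) - (1 - p) * Real.logb 2 (1 - p), ?_⟩
          rintro y ⟨x, rfl⟩; exact lowbd h0 h1 x
        refine le_antisymm ?_ (le_ciInf (lowbd h0 h1))
        calc (⨅ x : ℝ, p * x + Real.logb 2 ((2:ℝ) ^ (-x) + 1))
            ≤ p * (Real.logb 2 ((1-p)/p))
              + Real.logb 2 ((2:ℝ) ^ (-(Real.logb 2 ((1-p)/p))) + 1) :=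
            ciInf_le hbdd _
          _ = -(p * Real.logb 2 p) - (1 - p) * Real.logb 2 (1 - p) := attain h0 h1
end
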